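/- Let X be a nonempty countable type and give ℕ → X the product topology (X discrete). If A, B ⊆ ℕ → X are countable dense sets, then there exists f : (ℕ → X) → (ℕ → X) which is an isometry (for all x, y : ℕ → X and all n, x and y agree below n if and only if f x and f y agree below n) and satisfies f '' A = B. -/

import Mathlib

namespace Stmt3Aux

variable {X : Type*}

def E (x y : ℕ → X) (n : ℕ) : Prop := ∀ i < n, x i = y i

lemma E_refl (x : ℕ → X) (n : ℕ) : E x x n := fun _ _ => rfl

lemma E_symm {x y : ℕ → X} {n : ℕ} (h : E x y n) : E y x n := fun i hi => (h i hi).symm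

lemma E_trans {x y z : ℕ → X} {n : ℕ} (h1 : E x y n) (h2 : E y z n) : E x z n :=
  fun i hi => (h1 i hi).trans (h2 i hi)

lemma E_mono {x y : ℕ → X} {n m : ℕ} (h : n ≤ m) (hE : E x y m) : E x y n :=
  fun i hi => hE i (hi.trans_le h)

lemma E_succ {x y : ℕ → X} {n : ℕ} : E x y (n + 1) ↔ E x y n ∧ x n = y n := by
  constructor
  · exact fun h => ⟨E_mono (Nat.le_succ n) h, h n (Nat.lt_succ_self n)⟩
  · rintro ⟨h1, h2⟩ i hi
    rcases Nat.lt_succ_iff_lt_or_eq.1 hi with hi | rfl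
    · exact h1 i hi
    · exact h2

lemma E_ext {x y : ℕ → X} (h : ∀ n, E x y n) : x = y :=
  funext fun i => h (i + 1) i (Nat.lt_succ_self i)

lemma E_iff_le {x y : ℕ → X} {k : ℕ} (h1 : E x y k) (h2 : x k ≠ y k) (n : ℕ) :
    E x y n ↔ n ≤ k := by
  constructor
  · intro hE
    by_contra hn
    exact h2 (hE k (lt_of_not_ge hn))
  · intro hn
    exact E_mono hn h1

def Iso (L : List ((ℕ → X) × (ℕ → X))) : Prop :=
  ∀ p ∈ L, ∀ q ∈ L, ∀ n, E p.1 q.1 n ↔ E p.2 q.2 n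

lemma iso_nil : Iso ([] : List ((ℕ → X) × (ℕ → X))) := fun p hp => absurd hp List.not_mem_nil

lemma iso_cons {x y : ℕ → X} {L : List ((ℕ → X) × (ℕ → X))} (hL : Iso L)
    (h : ∀ q ∈ L, ∀ n, E x q.1 n ↔ E y q.2 n) : Iso ((x, y) :: L) := by
  intro p hp q hq n
  rcases List.mem_cons.1 hp with hp | hp <;> rcases List.mem_cons.1 hq with hq | hq
  · subst hp; subst hq; exact iff_of_true (E_refl _ _) (E_refl _ _)
  · subst hp; exact h q hq n
  · subst hq
    exact ⟨fun hE => E_symm ((h p hp n).1 (E_symm hE)),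
           fun hE => E_symm ((h p hp n).2 (E_symm hE))⟩
  · exact hL p hp q hq n

lemma iso_map_swap {L : List ((ℕ → X) × (ℕ → X))} (hL : Iso L) : Iso (L.map Prod.swap) := by
  intro p hp q hq n
  obtain ⟨p', hp', rfl⟩ := List.mem_map.1 hp
  obtain ⟨q', hq', rfl⟩ := List.mem_map.1 hq
  exact (hL p' hp' q' hq' n).symm

lemma exists_max {α : Type*} (f : α → ℕ) :
    ∀ (l : List α), l ≠ [] → ∃ a ∈ l, ∀ b ∈ l, f b ≤ f a
  | [], h => absurd rfl h
  | a :: l, _ => by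
    rcases eq_or_ne l [] with rfl | hl
    · exact ⟨a, List.mem_cons_self, by simp⟩
    · obtain ⟨c, hc, hmax⟩ := exists_max f l hl
      by_cases h : f a ≤ f c
      · refine ⟨c, List.mem_cons_of_mem _ hc, ?_⟩
        intro d hd
        rcases List.mem_cons.1 hd with rfl | hd
        · exact h
        · exact hmax d hd
      · refine ⟨a, List.mem_cons_self, ?_⟩
        intro d hd
        rcases List.mem_cons.1 hd with rfl | hd
        · exact le_rfl
        · exact (hmax d hd).trans (le_of_not_ge h)

lemma dense_pick [TopologicalSpace X] [DiscreteTopology X] {B : Set (ℕ → X)}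
    (hB : Dense B) (z : ℕ → X) (n : ℕ) : ∃ y ∈ B, ∀ i < n, z i = y i := by
  have hU : IsOpen {w : ℕ → X | ∀ i < n, z i = w i} := by
    have heq : {w : ℕ → X | ∀ i < n, z i = w i} = Set.pi (Set.Iio n) (fun i => {z i}) := by
      ext w
      simp [Set.mem_pi, eq_comm]
    rw [heq]
    exact isOpen_set_pi (Set.finite_Iio n) (fun i _ => isOpen_discrete _)
  obtain ⟨y, hy, hy2⟩ := hB.exists_mem_open hU ⟨z, fun i _ => rfl⟩
  exact ⟨y, hy, hy2⟩


open Classical in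
lemma extend {X : Type*} [Nonempty X] [TopologicalSpace X] [DiscreteTopology X]
    {B : Set (ℕ → X)} (hBd : Dense B)
    (L : List ((ℕ → X) × (ℕ → X))) (hL : Iso L) (hLB : ∀ p ∈ L, p.2 ∈ B) (x : ℕ → X) :
    ∃ y ∈ B, Iso ((x, y) :: L) := by
  by_cases hx : ∃ p ∈ L, p.1 = x
  · obtain ⟨p, hpL, hpx⟩ := hx
    refine ⟨p.2, hLB p hpL, iso_cons hL ?_⟩
    intro q hq n
    subst hpx
    exact hL p hpL q hq n
  · push_neg at hx
    rcases eq_or_ne L [] with rfl | hne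
    · obtain ⟨y, hyB, -⟩ := dense_pick hBd x 0
      exact ⟨y, hyB, iso_cons hL (by simp)⟩
    · -- agreement length function
      have hxne : ∀ p ∈ L, x ≠ p.1 := fun p hp h => hx p hp h.symm
      set m : (ℕ → X) → ℕ := fun u => if h : ∃ i, x i ≠ u i then Nat.find h else 0 with hm
      have hmE : ∀ u : ℕ → X, x ≠ u → E x u (m u) := by
        intro u hu i hi
        have h : ∃ i, x i ≠ u i := Function.ne_iff.1 hu
        rw [hm] at hi
        simp only [dif_pos h] at hi ⊢
        by_contra hc
        exact absurd (Nat.find_min h hi) (by simp [hc])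
      have hmne : ∀ u : ℕ → X, x ≠ u → x (m u) ≠ u (m u) := by
        intro u hu
        have h : ∃ i, x i ≠ u i := Function.ne_iff.1 hu
        simp only [hm, dif_pos h]
        exact Nat.find_spec h
      obtain ⟨p0, hp0L, hp0max⟩ := exists_max (fun p => m p.1) L hne
      set M := m p0.1 with hM
      have hv : ∃ v : X, ∀ q ∈ L, m q.1 = M → q.2 M ≠ v := by
        by_contra hcon
        push_neg at hcon
        choose q hqL hqM hqv using hcon
        have hXfin : Finite X := by
          have hsurj : Function.Surjective (fun i : Fin L.length => (L.get i).2 M) := by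
            intro v
            obtain ⟨i, hi⟩ := List.get_of_mem (hqL v)
            exact ⟨i, by simp only [hi, hqv v]⟩
          exact Finite.of_surjective _ hsurj
        set g : X → X := fun v => (q v).1 M with hg
        have hginj : Function.Injective g := by
          intro v v' hvv
          have e1 : E x (q v).1 M := hqM v ▸ hmE _ (hxne _ (hqL v))
          have e2 : E x (q v').1 M := hqM v' ▸ hmE _ (hxne _ (hqL v'))
          have e3 : E (q v).1 (q v').1 (M + 1) :=
            E_succ.2 ⟨E_trans (E_symm e1) e2, hvv⟩
          have e4 : E (q v).2 (q v').2 (M + 1) :=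
            (hL _ (hqL v) _ (hqL v') (M + 1)).1 e3
          rw [← hqv v, ← hqv v']
          exact e4 M (Nat.lt_succ_self M)
        have hgsurj : Function.Surjective g := Finite.injective_iff_surjective.1 hginj
        obtain ⟨v, hvM⟩ := hgsurj (x M)
        have : x (m (q v).1) ≠ (q v).1 (m (q v).1) := hmne _ (hxne _ (hqL v))
        rw [hqM v] at this
        exact this hvM.symm
      obtain ⟨v, hv⟩ := hv
      set z : ℕ → X := fun i => if i = M then v else p0.2 i with hz
      obtain ⟨y, hyB, hyz⟩ := dense_pick hBd z (M + 1)
      refine ⟨y, hyB, iso_cons hL ?_⟩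
      intro q hq n
      have hqx : x ≠ q.1 := hxne q hq
      set k := m q.1 with hk
      have hkM : k ≤ M := hp0max q hq
      have h1 : E x q.1 k := hmE _ hqx
      have h2 : x k ≠ q.1 k := hmne _ hqx
      have hyp0 : ∀ i < M, y i = p0.2 i := by
        intro i hi
        have := hyz i (hi.trans (Nat.lt_succ_self M))
        rw [hz] at this
        simp only [if_neg hi.ne] at this
        exact this.symm
      have hxp0 : E x p0.1 M := hmE _ (hxne _ hp0L)
      have hE1 : E p0.1 q.1 k := fun i hi =>
        (hxp0 i (hi.trans_le hkM)).symm.trans (h1 i hi)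
      have hE2 : E p0.2 q.2 k := (hL p0 hp0L q hq k).1 hE1
      have h3 : E y q.2 k := fun i hi => (hyp0 i (hi.trans_le hkM)).trans (hE2 i hi)
      have h4 : y k ≠ q.2 k := by
        rcases eq_or_lt_of_le hkM with heq | hlt
        · have hyM : y M = v := by
            have := hyz M (Nat.lt_succ_self M)
            rw [hz] at this
            simpa using this.symm
          rw [heq, hyM]
          exact fun hc => hv q hq heq hc.symm
        · have hyk : y k = p0.2 k := hyp0 k hlt
          have hne1 : p0.1 k ≠ q.1 k := by
            rw [show p0.1 k = x k from (hxp0 k hlt).symm]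
            exact h2
          have hne2 : ¬ E p0.1 q.1 (k + 1) := fun hE => hne1 (hE k (Nat.lt_succ_self k))
          have hne3 : ¬ E p0.2 q.2 (k + 1) := fun hE => hne2 ((hL p0 hp0L q hq (k + 1)).2 hE)
          intro hc
          exact hne3 (E_succ.2 ⟨hE2, hyk ▸ hc⟩)
      rw [E_iff_le h1 h2 n, ← E_iff_le h3 h4 n]


end Stmt3Aux

open Stmt3Aux

/-- For a nonempty countable discrete `X`, any two countable dense subsets of `ℕ → X`
(with the product topology) are mapped onto each other by an isometry of the whole space. -/
theorem stmt_3 {X : Type*} [Nonempty X] [Countable X]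
    [TopologicalSpace X] [DiscreteTopology X]
    (A B : Set (ℕ → X)) (hAc : A.Countable) (hBc : B.Countable)
    (hAd : Dense A) (hBd : Dense B) :
    ∃ f : (ℕ → X) → (ℕ → X),
      (∀ x y : ℕ → X, ∀ n : ℕ, (∀ i < n, x i = y i) ↔ (∀ i < n, f x i = f y i)) ∧
      f '' A = B := by
  classical
  obtain ⟨a, ha⟩ := hAc.exists_eq_range hAd.nonempty
  obtain ⟨b, hb⟩ := hBc.exists_eq_range hBd.nonempty
  set Good : List ((ℕ → X) × (ℕ → X)) → Prop :=
    fun L => Iso L ∧ ∀ p ∈ L, p.1 ∈ A ∧ p.2 ∈ B with hGoodDef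
  have step : ∀ (k : ℕ) (L : List ((ℕ → X) × (ℕ → X))), Good L →
      ∃ L', Good L' ∧ (∀ p ∈ L, p ∈ L') ∧ (∃ y, (a k, y) ∈ L') ∧ (∃ u, (u, b k) ∈ L') := by
    intro k L hGL
    obtain ⟨y, hyB, hIso1⟩ := extend hBd L hGL.1 (fun p hp => (hGL.2 p hp).2) (a k)
    have haA : a k ∈ A := by rw [ha]; exact ⟨k, rfl⟩
    have hbB : b k ∈ B := by rw [hb]; exact ⟨k, rfl⟩
    have hGL1 : Good ((a k, y) :: L) := by
      refine ⟨hIso1, ?_⟩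
      intro p hp
      rcases List.mem_cons.1 hp with rfl | hp
      · exact ⟨haA, hyB⟩
      · exact hGL.2 p hp
    obtain ⟨u, huA, hIso2⟩ := extend hAd (((a k, y) :: L).map Prod.swap)
        (iso_map_swap hGL1.1)
        (fun p hp => by
          obtain ⟨p', hp', rfl⟩ := List.mem_map.1 hp
          exact (hGL1.2 p' hp').1) (b k)
    have hIso3 : Iso ((u, b k) :: (a k, y) :: L) := by
      have h1 : Iso (((b k, u) :: ((a k, y) :: L).map Prod.swap).map Prod.swap) :=
        iso_map_swap hIso2
      simpa [List.map_map, Prod.swap_swap_eq] using h1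
    refine ⟨(u, b k) :: (a k, y) :: L, ⟨hIso3, ?_⟩, ?_, ⟨y, ?_⟩, ⟨u, ?_⟩⟩
    · intro p hp
      rcases List.mem_cons.1 hp with rfl | hp
      · exact ⟨huA, hbB⟩
      · exact hGL1.2 p hp
    · intro p hp
      exact List.mem_cons_of_mem _ (List.mem_cons_of_mem _ hp)
    · exact List.mem_cons_of_mem _ (List.mem_cons_self)
    · exact List.mem_cons_self
  choose step hGood hsub hfst hsnd using step
  obtain ⟨F, hFsucc⟩ : ∃ F : ℕ → {L : List ((ℕ → X) × (ℕ → X)) // Good L},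
      ∀ k, (F (k + 1)).1 = step k (F k).1 (F k).2 :=
    ⟨fun n => Nat.rec ⟨[], ⟨iso_nil, fun p hp => absurd hp List.not_mem_nil⟩⟩
      (fun k p => ⟨step k p.1 p.2, hGood k p.1 p.2⟩) n, fun _ => rfl⟩
  have hmono : ∀ k j, k ≤ j → ∀ p ∈ (F k).1, p ∈ (F j).1 := by
    intro k j hkj
    induction j, hkj using Nat.le_induction with
    | base => exact fun p hp => hp
    | succ j hkj ih =>
      intro p hp
      rw [hFsucc j]
      exact hsub j (F j).1 (F j).2 p (ih p hp)
  have hfun : ∀ (u y y' : ℕ → X) (k k' : ℕ),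
      (u, y) ∈ (F k).1 → (u, y') ∈ (F k').1 → y = y' := by
    intro u y y' k k' h1 h2
    have h1' := hmono k (max k k') (le_max_left _ _) _ h1
    have h2' := hmono k' (max k k') (le_max_right _ _) _ h2
    exact E_ext fun n => ((F (max k k')).2.1 _ h1' _ h2' n).1 (E_refl u n)
  have hA2B : ∀ u, u ∈ A → ∃ y, y ∈ B ∧ ∃ k, (u, y) ∈ (F k).1 := by
    intro u hu
    rw [ha] at hu
    obtain ⟨k, rfl⟩ := hu
    obtain ⟨y, hy⟩ := hfst k (F k).1 (F k).2
    rw [← hFsucc k] at hy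
    exact ⟨y, ((F (k + 1)).2.2 _ hy).2, k + 1, hy⟩
  choose h hhB K hmem using hA2B
  have hcoh : ∀ u (hu : u ∈ A) u' (hu' : u' ∈ A) (n : ℕ),
      E u u' n ↔ E (h u hu) (h u' hu') n := by
    intro u hu u' hu' n
    have h1 := hmono _ (max (K u hu) (K u' hu')) (le_max_left _ _) _ (hmem u hu)
    have h2 := hmono _ (max (K u hu) (K u' hu')) (le_max_right _ _) _ (hmem u' hu')
    exact (F (max (K u hu) (K u' hu'))).2.1 _ h1 _ h2 n
  choose w hwA hwE using fun (z : ℕ → X) (n : ℕ) => dense_pick hAd z n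
  set f : (ℕ → X) → (ℕ → X) := fun z n => h (w z (n + 1)) (hwA z (n + 1)) n with hf
  have hfix : ∀ u (hu : u ∈ A), f u = h u hu := by
    intro u hu
    funext n
    have hEw : E (w u (n + 1)) u (n + 1) := fun i hi => (hwE u (n + 1) i hi).symm
    exact ((hcoh _ (hwA u (n + 1)) u hu (n + 1)).1 hEw) n (Nat.lt_succ_self n)
  refine ⟨f, ?_, ?_⟩
  · intro z z' n
    constructor
    · intro hE i hi
      have hEw : E (w z (i + 1)) (w z' (i + 1)) (i + 1) := fun j hj =>
        (hwE z (i + 1) j hj).symm.trans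
          ((hE j (lt_of_lt_of_le hj hi)).trans (hwE z' (i + 1) j hj))
      exact (hcoh _ _ _ _ (i + 1)).1 hEw i (Nat.lt_succ_self i)
    · intro hfE i
      induction i using Nat.strong_induction_on with
      | _ i ih =>
        intro hi
        have hEw : E (w z (i + 1)) (w z' (i + 1)) i := fun j hj =>
          (hwE z (i + 1) j (by omega)).symm.trans
            ((ih j hj (by omega)).trans (hwE z' (i + 1) j (by omega)))
        have hEh : E (h (w z (i + 1)) (hwA z (i + 1))) (h (w z' (i + 1)) (hwA z' (i + 1)))
            (i + 1) := E_succ.2 ⟨(hcoh _ _ _ _ i).1 hEw, hfE i hi⟩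
        have hEw1 : E (w z (i + 1)) (w z' (i + 1)) (i + 1) :=
          (hcoh _ _ _ _ (i + 1)).2 hEh
        calc z i = w z (i + 1) i := hwE z (i + 1) i (Nat.lt_succ_self i)
          _ = w z' (i + 1) i := hEw1 i (Nat.lt_succ_self i)
          _ = z' i := (hwE z' (i + 1) i (Nat.lt_succ_self i)).symm
  · ext y
    constructor
    · rintro ⟨u, hu, rfl⟩
      rw [hfix u hu]
      exact hhB u hu
    · intro hy
      rw [hb] at hy
      obtain ⟨k, rfl⟩ := hy
      obtain ⟨u, humem⟩ := hsnd k (F k).1 (F k).2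
      rw [← hFsucc k] at humem
      have huA : u ∈ A := ((F (k + 1)).2.2 _ humem).1
      refine ⟨u, huA, ?_⟩
      rw [hfix u huA]
      exact hfun u (h u huA) (b k) _ _ (hmem u huA) humem
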